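/- arXiv:1410.5040 — 2 statements merged into one kernel-verified Lean document; each statement's English description precedes it below -/
import Mathlib

section
/- Let r(α) denote the unique nonnegative zero of f(ζ,α) = (1−ζ²)(α + ∫₀^ζ e^{−t²/2} dt) − ζ e^{−ζ²/2}. Then for ζ > r(α), f(ζ,α) < 0, and for 0 ≤ ζ < r(α) with r(α) ≠ 0, f(ζ,α) > 0. -/
noncomputable def f (ζ α : ℝ) : ℝ :=
  (1 - ζ ^ 2) * (α + ∫ t in (0:ℝ)..ζ, Real.exp (-t ^ 2 / 2)) - ζ * Real.exp (-ζ ^ 2 / 2)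

lemma hasDerivAt_f (α x : ℝ) :
    HasDerivAt (fun ζ => f ζ α)
      (-2 * x * (α + ∫ t in (0:ℝ)..x, Real.exp (-t ^ 2 / 2))) x := by
  have hg : Continuous fun t : ℝ => Real.exp (-t ^ 2 / 2) := by continuity
  have hF : HasDerivAt (fun ζ : ℝ => ∫ t in (0:ℝ)..ζ, Real.exp (-t ^ 2 / 2))
      (Real.exp (-x ^ 2 / 2)) x :=
    intervalIntegral.integral_hasDerivAt_right (hg.intervalIntegrable _ _)
      (hg.stronglyMeasurableAtFilter _ _) hg.continuousAt
  have hinner : HasDerivAt (fun ζ : ℝ => -ζ ^ 2 / 2) (-x) x := by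
    have := ((hasDerivAt_pow 2 x).neg.div_const 2)
    refine this.congr_deriv ?_
    push_cast
    ring
  have he : HasDerivAt (fun ζ : ℝ => Real.exp (-ζ ^ 2 / 2))
      (Real.exp (-x ^ 2 / 2) * (-x)) x := hinner.exp
  have h1 : HasDerivAt (fun ζ : ℝ => (1 - ζ ^ 2)) (0 - 2 * x ^ 1) x := by
    have := (hasDerivAt_const x (1:ℝ)).sub (hasDerivAt_pow 2 x)
    exact this.congr_deriv (by norm_num)
  have h := (h1.mul ((hasDerivAt_const x α).add hF)).sub ((hasDerivAt_id x).mul he)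
  refine h.congr_deriv ?_
  simp only [id_eq, Pi.add_apply]
  ring

theorem stmt3 (α rα : ℝ) (hα : 0 ≤ α) (hr0 : 0 ≤ rα) (hrz : f rα α = 0) :
    (∀ ζ : ℝ, rα < ζ → f ζ α < 0) ∧
    (rα ≠ 0 → ∀ ζ : ℝ, 0 ≤ ζ → ζ < rα → 0 < f ζ α) := by
  have hanti : StrictAntiOn (fun ζ => f ζ α) (Set.Ici 0) := by
    apply strictAntiOn_of_deriv_neg (convex_Ici 0)
    · exact fun x _ => (hasDerivAt_f α x).differentiableAt.continuousAt.continuousWithinAt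
    · intro x hx
      rw [interior_Ici] at hx
      rw [(hasDerivAt_f α x).deriv]
      have hg : Continuous fun t : ℝ => Real.exp (-t ^ 2 / 2) := by continuity
      have hFpos : 0 < ∫ t in (0:ℝ)..x, Real.exp (-t ^ 2 / 2) :=
        intervalIntegral.intervalIntegral_pos_of_pos (hg.intervalIntegrable _ _)
          (fun t => Real.exp_pos _) hx
      have hx' : 0 < x := hx
      nlinarith [hx', hFpos, hα]
  constructor
  · intro ζ hζ
    have := hanti (Set.mem_Ici.2 hr0) (Set.mem_Ici.2 (hr0.trans hζ.le)) hζ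
    simpa [hrz] using this
  · intro _ ζ hζ0 hζr
    have := hanti (Set.mem_Ici.2 hζ0) (Set.mem_Ici.2 hr0) hζr
    simpa [hrz] using this
end

section
/- The function r : (0,∞) → ℝ, where r(α) is the unique positive zero of f(ζ,α) = (1−ζ²)(α + ∫₀^ζ e^{−t²/2} dt) − ζ e^{−ζ²/2}, is strictly increasing in α, with derivative r'(α) = (1−r(α)²)² / (2 r(α)² exp(−r(α)²/2)) > 0. -/
open Set intervalIntegral

noncomputable def gg (ζ : ℝ) : ℝ :=
  ζ * Real.exp (-ζ ^ 2 / 2) / (1 - ζ ^ 2) - ∫ t in (0:ℝ)..ζ, Real.exp (-t ^ 2 / 2)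

lemma contExp : Continuous fun t : ℝ => Real.exp (-t ^ 2 / 2) := by continuity

lemma hasDerivI (ζ : ℝ) :
    HasDerivAt (fun z => ∫ t in (0:ℝ)..z, Real.exp (-t ^ 2 / 2)) (Real.exp (-ζ ^ 2 / 2)) ζ :=
  intervalIntegral.integral_hasDerivAt_right (contExp.intervalIntegrable _ _)
    (contExp.aestronglyMeasurable.stronglyMeasurableAtFilter) contExp.continuousAt

lemma I_pos {ζ : ℝ} (h : 0 < ζ) : 0 < ∫ t in (0:ℝ)..ζ, Real.exp (-t ^ 2 / 2) :=
  intervalIntegral.intervalIntegral_pos_of_pos (contExp.intervalIntegrable _ _)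
    (fun _ => Real.exp_pos _) h

lemma hasDerivG {ζ : ℝ} (h : 1 - ζ ^ 2 ≠ 0) :
    HasDerivAt gg (2 * ζ ^ 2 * Real.exp (-ζ ^ 2 / 2) / (1 - ζ ^ 2) ^ 2) ζ := by
  have hexp : HasDerivAt (fun z : ℝ => Real.exp (-z ^ 2 / 2)) (Real.exp (-ζ ^ 2 / 2) * (-ζ)) ζ := by
    have h1 : HasDerivAt (fun z : ℝ => -z ^ 2 / 2) (-ζ) ζ := by
      have := ((hasDerivAt_pow 2 ζ).neg.div_const 2)
      refine this.congr_deriv ?_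
      ring
    exact (Real.hasDerivAt_exp _).comp ζ h1
  have hnum : HasDerivAt (fun z : ℝ => z * Real.exp (-z ^ 2 / 2))
      (1 * Real.exp (-ζ ^ 2 / 2) + ζ * (Real.exp (-ζ ^ 2 / 2) * (-ζ))) ζ :=
    (hasDerivAt_id ζ).mul hexp
  have hden : HasDerivAt (fun z : ℝ => 1 - z ^ 2) (-(2 * ζ)) ζ := by
    have := (hasDerivAt_pow 2 ζ).const_sub 1
    refine this.congr_deriv ?_
    ring
  have hdiv := hnum.div hden h
  have h2 := hdiv.sub (hasDerivI ζ)
  refine HasDerivAt.congr_deriv (f := gg) h2 ?_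
  field_simp
  ring

lemma gg_zero : gg 0 = 0 := by simp [gg]

lemma r_props {r : ℝ → ℝ}
    (hr : ∀ α : ℝ, 0 < α → 0 < r α ∧ f (r α) α = 0 ∧ ∀ ζ : ℝ, 0 < ζ → f ζ α = 0 → ζ = r α)
    {α : ℝ} (hα : 0 < α) : r α ∈ Ioo (0:ℝ) 1 ∧ gg (r α) = α := by
  obtain ⟨h0, hf0, -⟩ := hr α hα
  set ζ := r α
  set I := ∫ t in (0:ℝ)..ζ, Real.exp (-t ^ 2 / 2) with hI
  set E := Real.exp (-ζ ^ 2 / 2) with hE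
  have hIpos : 0 < I := I_pos h0
  have hEpos : 0 < E := Real.exp_pos _
  have key : (1 - ζ ^ 2) * (α + I) = ζ * E := by
    have : (1 - ζ ^ 2) * (α + I) - ζ * E = 0 := hf0
    linarith
  have hsum : 0 < α + I := by linarith
  have hprod : 0 < (1 - ζ ^ 2) * (α + I) := key ▸ mul_pos h0 hEpos
  have h1 : 0 < 1 - ζ ^ 2 := by nlinarith
  have hlt : ζ < 1 := by nlinarith
  refine ⟨⟨h0, hlt⟩, ?_⟩
  have hdiv : ζ * E / (1 - ζ ^ 2) = α + I := by
    rw [div_eq_iff h1.ne', ← key]; ring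
  show ζ * E / (1 - ζ ^ 2) - I = α
  rw [hdiv]; ring

lemma f_gg {ζ : ℝ} (hζ : ζ ∈ Ioo (0:ℝ) 1) : f ζ (gg ζ) = 0 := by
  have h1 : (1:ℝ) - ζ ^ 2 ≠ 0 := by nlinarith [hζ.1, hζ.2]
  show (1 - ζ ^ 2) * (ζ * Real.exp (-ζ ^ 2 / 2) / (1 - ζ ^ 2)
      - (∫ t in (0:ℝ)..ζ, Real.exp (-t ^ 2 / 2))
      + ∫ t in (0:ℝ)..ζ, Real.exp (-t ^ 2 / 2)) - ζ * Real.exp (-ζ ^ 2 / 2) = 0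
  field_simp
  ring

lemma ggMono : StrictMonoOn gg (Set.Ico 0 1) := by
  have hc : ContinuousOn gg (Set.Ico 0 1) := fun x hx => by
    have h1 : (1:ℝ) - x ^ 2 ≠ 0 := by
      have := hx.1; have := hx.2; nlinarith
    exact ((hasDerivG h1).continuousAt).continuousWithinAt
  refine strictMonoOn_of_deriv_pos (convex_Ico 0 1) hc fun x hx => ?_
  rw [interior_Ico] at hx
  have h1 : (1:ℝ) - x ^ 2 ≠ 0 := by nlinarith [hx.1, hx.2]
  rw [(hasDerivG h1).deriv]
  have hx0 : (0:ℝ) < x := hx.1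
  positivity

lemma gg_pos {ζ : ℝ} (hζ : ζ ∈ Ioo (0:ℝ) 1) : 0 < gg ζ := by
  have := ggMono (left_mem_Ico.2 one_pos) ⟨le_of_lt hζ.1, hζ.2⟩ hζ.1
  rwa [gg_zero] at this

lemma r_gg {r : ℝ → ℝ}
    (hr : ∀ α : ℝ, 0 < α → 0 < r α ∧ f (r α) α = 0 ∧ ∀ ζ : ℝ, 0 < ζ → f ζ α = 0 → ζ = r α)
    {ζ : ℝ} (hζ : ζ ∈ Ioo (0:ℝ) 1) : r (gg ζ) = ζ :=
  ((hr (gg ζ) (gg_pos hζ)).2.2 ζ hζ.1 (f_gg hζ)).symm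

theorem stmt4 (r : ℝ → ℝ)
    (hr : ∀ α : ℝ, 0 < α → 0 < r α ∧ f (r α) α = 0 ∧ ∀ ζ : ℝ, 0 < ζ → f ζ α = 0 → ζ = r α) :
    StrictMonoOn r (Set.Ioi 0) ∧
    ∀ α : ℝ, 0 < α →
      HasDerivAt r ((1 - (r α) ^ 2) ^ 2 / (2 * (r α) ^ 2 * Real.exp (-(r α) ^ 2 / 2))) α ∧
      0 < (1 - (r α) ^ 2) ^ 2 / (2 * (r α) ^ 2 * Real.exp (-(r α) ^ 2 / 2)) := by
  have hmono : StrictMonoOn r (Set.Ioi 0) := by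
    intro a ha b hb hab
    obtain ⟨ma, ga⟩ := r_props hr ha
    obtain ⟨mb, gb⟩ := r_props hr hb
    have := (ggMono.lt_iff_lt ⟨ma.1.le, ma.2⟩ ⟨mb.1.le, mb.2⟩).1
    apply this
    rw [ga, gb]; exact hab
  refine ⟨hmono, fun α hα => ?_⟩
  obtain ⟨mα, gα⟩ := r_props hr hα
  have himg : r '' Set.Ioi 0 = Set.Ioo 0 1 := by
    apply Set.Subset.antisymm
    · rintro _ ⟨y, hy, rfl⟩
      exact (r_props hr hy).1
    · intro ζ hζ
      exact ⟨gg ζ, gg_pos hζ, r_gg hr hζ⟩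
  have hcont : ContinuousAt r α := by
    apply hmono.continuousAt_of_image_mem_nhds (Ioi_mem_nhds hα)
    rw [himg]
    exact Ioo_mem_nhds mα.1 mα.2
  have h1 : (1:ℝ) - (r α) ^ 2 ≠ 0 := by nlinarith [mα.1, mα.2]
  have hdpos : 0 < 2 * (r α) ^ 2 * Real.exp (-(r α) ^ 2 / 2) :=
    mul_pos (mul_pos two_pos (pow_pos mα.1 2)) (Real.exp_pos _)
  have hg' : HasDerivAt gg (2 * (r α) ^ 2 * Real.exp (-(r α) ^ 2 / 2) / (1 - (r α) ^ 2) ^ 2)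
      (r α) := hasDerivG h1
  have hne : 2 * (r α) ^ 2 * Real.exp (-(r α) ^ 2 / 2) / (1 - (r α) ^ 2) ^ 2 ≠ 0 :=
    (div_pos hdpos (pow_pos (by nlinarith [mα.1, mα.2] : (0:ℝ) < 1 - (r α) ^ 2) 2)).ne'
  have hfg : ∀ᶠ y in nhds α, gg (r y) = y := by
    filter_upwards [Ioi_mem_nhds hα] with y hy
    exact (r_props hr hy).2
  have hd := HasDerivAt.of_local_left_inverse hcont hg' hne hfg
  rw [inv_div] at hd
  exact ⟨hd, div_pos (pow_pos (by nlinarith [mα.1, mα.2] : (0:ℝ) < 1 - (r α) ^ 2) 2) hdpos⟩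
end
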